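/- Let T be a totally ordered set, 𝔽 a field, and I ⊆ T an interval. Then overline(C(I)), defined pointwise by overline(C(I))_t = colim_{s < t} C(I)_s (direct limit, with the colimit over an empty index set being 0), is isomorphic to the interval module C(overline(I)), where overline(I) = {t : I ∩ (−∞,t) is nonempty and cofinal in (−∞,t)} (and C(∅) = 0). -/

import Mathlib

open CategoryTheory CategoryTheory.Limits

set_option maxHeartbeats 1000000
set_option synthInstance.maxHeartbeats 200000

/-- A persistence module over a totally ordered set `T`: a functor from `T` (viewed as a
category via its order) to the category of `F`-vector spaces. -/
abbrev PersistenceModule (F : Type) [Field F] (T : Type) [LinearOrder T] :=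
  T ⥤ ModuleCat.{0} F

variable (F : Type) [Field F] (T : Type) [LinearOrder T]

/-- The inclusion functor of the strict up-set of `t` into `T`. -/
def upFunctor (t : T) : {s : T // t < s} ⥤ T :=
  Monotone.functor (f := (Subtype.val : {s : T // t < s} → T)) (fun _ _ h => h)

/-- The inclusion functor of the strict down-set of `t` into `T`. -/
def downFunctor (t : T) : {s : T // s < t} ⥤ T :=
  Monotone.functor (f := (Subtype.val : {s : T // s < t} → T)) (fun _ _ h => h)

/-- `underline M`, with `(underline M)_t = lim_{s > t} M_s` (the limit over the empty
category being `0`). -/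
noncomputable def underlinePM (M : PersistenceModule F T) : PersistenceModule F T where
  obj t := limit (upFunctor T t ⋙ M)
  map {s t} f := limit.lift (upFunctor T t ⋙ M)
    { pt := limit (upFunctor T s ⋙ M)
      π :=
        { app := fun u => limit.π (upFunctor T s ⋙ M) ⟨u.1, lt_of_le_of_lt (leOfHom f) u.2⟩
          naturality := fun u v g => by
            dsimp
            refine Eq.trans (Category.id_comp _) ?_
            exact (limit.w (upFunctor T s ⋙ M) (homOfLE (leOfHom g))).symm } }
  map_id t := by
    apply limit.hom_ext
    intro u
    simp
  map_comp {s t u} f g := by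
    apply limit.hom_ext
    intro v
    simp
    refine Eq.symm ((limit.lift_π _ _).trans ?_)
    rfl

/-- `overline M`, with `(overline M)_t = colim_{s < t} M_s` (the colimit over the empty
category being `0`). -/
noncomputable def overlinePM (M : PersistenceModule F T) : PersistenceModule F T where
  obj t := colimit (downFunctor T t ⋙ M)
  map {s t} f := colimit.desc (downFunctor T s ⋙ M)
    { pt := colimit (downFunctor T t ⋙ M)
      ι :=
        { app := fun u => colimit.ι (downFunctor T t ⋙ M) ⟨u.1, lt_of_lt_of_le u.2 (leOfHom f)⟩
          naturality := fun u v g => by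
            dsimp
            refine Eq.trans ?_ (Category.comp_id _).symm
            have h : (⟨u.1, lt_of_lt_of_le u.2 (leOfHom f)⟩ : {x : T // x < t}) ⟶
                ⟨v.1, lt_of_lt_of_le v.2 (leOfHom f)⟩ := homOfLE (leOfHom g)
            exact colimit.w (downFunctor T t ⋙ M) h } }
  map_id t := by
    apply colimit.hom_ext
    intro u
    simp
  map_comp {s t u} f g := by
    apply colimit.hom_ext
    intro v
    simp
    refine Eq.symm ((colimit.ι_desc _ _).trans ?_)
    rfl

/-- The canonical morphism `M ⟶ underline M` given by the universal property of the limits. -/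
noncomputable def toUnderline (M : PersistenceModule F T) : M ⟶ underlinePM F T M where
  app t := limit.lift (upFunctor T t ⋙ M)
    { pt := M.obj t
      π :=
        { app := fun u => M.map (homOfLE u.2.le)
          naturality := fun u v g => by
            dsimp
            rw [Category.id_comp, ← M.map_comp]
            rfl } }
  naturality s t f := by
    apply limit.hom_ext
    intro u
    simp only [underlinePM, Category.assoc, limit.lift_π, ← M.map_comp]
    refine Eq.symm ((limit.lift_π _ _).trans ?_)
    rfl

/-- The canonical morphism `overline M ⟶ M` given by the universal property of the colimits. -/
noncomputable def fromOverline (M : PersistenceModule F T) : overlinePM F T M ⟶ M where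
  app t := colimit.desc (downFunctor T t ⋙ M)
    { pt := M.obj t
      ι :=
        { app := fun u => M.map (homOfLE u.2.le)
          naturality := fun u v g => by
            dsimp
            rw [Category.comp_id, ← M.map_comp]
            rfl } }
  naturality s t f := by
    apply colimit.hom_ext
    intro u
    simp only [overlinePM, colimit.ι_desc_assoc, colimit.ι_desc, ← M.map_comp]
    exact colimit.ι_desc _ _

/-- `M` is upper semi-continuous if the canonical map `M_t → lim_{s > t} M_s` is an
isomorphism for all `t`. -/
noncomputable def IsUSC (M : PersistenceModule F T) : Prop :=
  ∀ t : T, IsIso ((toUnderline F T M).app t)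

/-- `M` is lower semi-continuous if the canonical map `colim_{s < t} M_s → M_t` is an
isomorphism for all `t`. -/
noncomputable def IsLSC (M : PersistenceModule F T) : Prop :=
  ∀ t : T, IsIso ((fromOverline F T M).app t)

/-- `M` is ephemeral if all structure maps `M_{s,t}` with `s < t` vanish. -/
def Ephemeral (M : PersistenceModule F T) : Prop :=
  ∀ s t : T, ∀ h : s < t, M.map (homOfLE h.le) = 0

/-- `M` is q-tame if all structure maps `M_{s,t}` with `s < t` have finite rank. -/
def QTame (M : PersistenceModule F T) : Prop :=
  ∀ s t : T, ∀ h : s < t, Module.Finite F (LinearMap.range (M.map (homOfLE h.le)).hom)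

/-- A morphism of persistence modules is a weak isomorphism if its kernel and cokernel
are ephemeral. -/
noncomputable def IsWeakIso {M N : PersistenceModule F T} (φ : M ⟶ N) : Prop :=
  Ephemeral F T (kernel φ) ∧ Ephemeral F T (cokernel φ)

open Classical

/-- The interval module `C(I)`: the field `F` at points of `I` with identity structure
maps inside `I`, and `0` elsewhere (in particular `C(∅) = 0`). -/
noncomputable def intervalModule (I : Set T) : PersistenceModule F T where
  obj t := ModuleCat.of F (↥(if t ∈ I then (⊤ : Submodule F F) else (⊥ : Submodule F F)))
  map {s t} f :=
    if h : Set.Icc s t ⊆ I then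
      ModuleCat.ofHom (Submodule.inclusion (by
        rw [if_pos (h (Set.right_mem_Icc.mpr (leOfHom f)))]
        exact le_top))
    else 0
  map_id t := by
    try dsimp only
    by_cases ht : t ∈ I
    · rw [dif_pos (by simpa using ht)]
      rfl
    · have h : ¬ Set.Icc t t ⊆ I := by simpa using ht
      rw [dif_neg h]
      have hs : Subsingleton (↥(if t ∈ I then (⊤ : Submodule F F) else (⊥ : Submodule F F))) := by
        rw [if_neg ht]
        infer_instance
      apply ModuleCat.hom_ext
      apply LinearMap.ext
      intro x
      exact @Subsingleton.elim _ hs _ _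
  map_comp {s t u} f g := by
    try dsimp only
    by_cases h : Set.Icc s u ⊆ I
    · have h1 : Set.Icc s t ⊆ I :=
        fun x hx => h ⟨hx.1, le_trans hx.2 (leOfHom g)⟩
      have h2 : Set.Icc t u ⊆ I :=
        fun x hx => h ⟨le_trans (leOfHom f) hx.1, hx.2⟩
      rw [dif_pos h, dif_pos h1, dif_pos h2]
      rfl
    · rw [dif_neg h]
      by_cases h1 : Set.Icc s t ⊆ I
      · have h2 : ¬ Set.Icc t u ⊆ I := fun h2 => h (by
          intro x hx
          rcases le_total x t with hxt | htx
          · exact h1 ⟨hx.1, hxt⟩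
          · exact h2 ⟨htx, hx.2⟩)
        rw [dif_pos h1, dif_neg h2, Limits.comp_zero]
      · rw [dif_neg h1, Limits.zero_comp]

/-- Functoriality of `overline` on morphisms. -/
noncomputable def overlineMap {M N : PersistenceModule F T} (φ : M ⟶ N) :
    overlinePM F T M ⟶ overlinePM F T N where
  app t := colimMap (Functor.whiskerLeft (downFunctor T t) φ)
  naturality s t f := by
    apply colimit.hom_ext
    intro u
    simp [overlinePM]
    exact ι_colimMap (Functor.whiskerLeft (downFunctor T t) φ) _

/-- Functoriality of `underline` on morphisms. -/
noncomputable def underlineMap {M N : PersistenceModule F T} (φ : M ⟶ N) :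
    underlinePM F T M ⟶ underlinePM F T N where
  app t := limMap (Functor.whiskerLeft (upFunctor T t) φ)
  naturality s t f := by
    apply limit.hom_ext
    intro u
    simp [underlinePM]
    exact (limMap_π (Functor.whiskerLeft (upFunctor T s) φ) _).symm

/-- The radical of a persistence module: the image of the canonical morphism
`overline M ⟶ M`. -/
noncomputable def radPM (M : PersistenceModule F T) : PersistenceModule F T :=
  image (fromOverline F T M)

/-- The canonical morphism from the direct sum to the product of a collection of
persistence modules. -/
noncomputable def sumToProd {A : Type} (M : A → PersistenceModule F T) :
    (∐ M) ⟶ (∏ᶜ M) :=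
  Sigma.desc fun a => Pi.lift fun b =>
    if h : a = b then eqToHom (congrArg M h) else 0

/-- The pointwise dual persistence module `M*`, indexed by the opposite order. -/
noncomputable def dualPM (M : PersistenceModule F T) : PersistenceModule F Tᵒᵈ where
  obj t := ModuleCat.of F (Module.Dual F (M.obj (OrderDual.ofDual t)))
  map {s t} f :=
    ModuleCat.ofHom (M.map (homOfLE (leOfHom f : OrderDual.ofDual t ≤ OrderDual.ofDual s))).hom.dualMap
  map_id t := by
    try dsimp only
    rw [show (homOfLE _ : OrderDual.ofDual t ⟶ OrderDual.ofDual t) = 𝟙 _ from rfl,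
      M.map_id]
    rfl
  map_comp {s t u} f g := by
    try dsimp only
    rw [show (homOfLE _ : OrderDual.ofDual u ⟶ OrderDual.ofDual s) =
        (homOfLE (leOfHom g : OrderDual.ofDual u ≤ OrderDual.ofDual t)) ≫
        (homOfLE (leOfHom f : OrderDual.ofDual t ≤ OrderDual.ofDual s)) from rfl,
      M.map_comp]
    rfl

/-- `I` is an interval in a totally ordered set: if `s ≤ t ≤ u` with `s, u ∈ I`, then `t ∈ I`. -/
def IsInterval {T : Type*} [LinearOrder T] (I : Set T) : Prop :=
  ∀ ⦃s t u : T⦄, s ≤ t → t ≤ u → s ∈ I → u ∈ I → t ∈ I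

/-- `underline I`: the set of `t` such that `I ∩ {s | t < s}` is nonempty and coinitial
in `{s | t < s}`. -/
def underlineSet {T : Type*} [LinearOrder T] (I : Set T) : Set T :=
  {t | (I ∩ Set.Ioi t).Nonempty ∧ ∀ s ∈ Set.Ioi t, ∃ u ∈ I ∩ Set.Ioi t, u ≤ s}

/-- `overline I`: the set of `t` such that `I ∩ {s | s < t}` is nonempty and cofinal
in `{s | s < t}`. -/
def overlineSet {T : Type*} [LinearOrder T] (I : Set T) : Set T :=
  {t | (I ∩ Set.Iio t).Nonempty ∧ ∀ s ∈ Set.Iio t, ∃ u ∈ I ∩ Set.Iio t, s ≤ u}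

/-- `rad I = I ∩ overline I`. -/
def radSet {T : Type*} [LinearOrder T] (I : Set T) : Set T :=
  I ∩ overlineSet I

section OverlineAux

lemma lemA {T : Type} [LinearOrder T] {I : Set T} (hI : IsInterval I) {u t : T} (hut : u < t)
    (h : Set.Ico u t ⊆ I) : t ∈ overlineSet I := by
  refine ⟨⟨u, h ⟨le_refl u, hut⟩, hut⟩, fun v hv => ?_⟩
  rcases le_total u v with huv | hvu
  · exact ⟨v, ⟨h ⟨huv, hv⟩, hv⟩, le_refl v⟩
  · exact ⟨u, ⟨h ⟨le_refl u, hut⟩, hut⟩, hvu⟩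

lemma lemB {T : Type} [LinearOrder T] {I : Set T} (hI : IsInterval I) {u t : T} (hu : u ∈ I)
    (ht : t ∈ overlineSet I) : Set.Ico u t ⊆ I := by
  intro w hw
  obtain ⟨x, ⟨hxI, _⟩, hwx⟩ := ht.2 w hw.2
  exact hI hw.1 hwx hu hxI

lemma im_map_pos {I : Set T} {a b : T} (f : a ⟶ b) (hab : Set.Icc a b ⊆ I) :
    (intervalModule F T I).map f = ModuleCat.ofHom (Submodule.inclusion
      (show (if a ∈ I then (⊤ : Submodule F F) else ⊥) ≤ (if b ∈ I then ⊤ else ⊥) by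
        rw [if_pos (hab ⟨leOfHom f, le_refl b⟩)]; exact le_top)) := by
  dsimp only [intervalModule]
  rw [dif_pos hab]

lemma im_map_neg {I : Set T} {a b : T} (f : a ⟶ b) (hab : ¬ Set.Icc a b ⊆ I) :
    (intervalModule F T I).map f = 0 := by
  dsimp only [intervalModule]
  rw [dif_neg hab]
  rfl

/-- The component at `j` of the comparison cocone. -/
noncomputable def overComp (I : Set T) (hI : IsInterval I) (t : T) (j : {s : T // s < t}) :
    (intervalModule F T I).obj j.1 ⟶ (intervalModule F T (overlineSet I)).obj t :=
  if h : Set.Ico j.1 t ⊆ I then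
    ModuleCat.ofHom (Submodule.inclusion (show (if j.1 ∈ I then (⊤ : Submodule F F) else ⊥) ≤
        (if t ∈ overlineSet I then ⊤ else ⊥) by
      rw [if_pos (lemA hI j.2 h)]; exact le_top))
  else 0

lemma overComp_pos (I : Set T) (hI : IsInterval I) (t : T) (j : {s : T // s < t})
    (h : Set.Ico j.1 t ⊆ I) :
    overComp F T I hI t j = ModuleCat.ofHom (Submodule.inclusion
      (show (if j.1 ∈ I then (⊤ : Submodule F F) else ⊥) ≤
        (if t ∈ overlineSet I then ⊤ else ⊥) by
      rw [if_pos (lemA hI j.2 h)]; exact le_top)) :=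
  dif_pos h

lemma overComp_neg (I : Set T) (hI : IsInterval I) (t : T) (j : {s : T // s < t})
    (h : ¬ Set.Ico j.1 t ⊆ I) : overComp F T I hI t j = 0 :=
  dif_neg h

/-- The comparison cocone with vertex `C(overline I)_t`. -/
noncomputable def overCocone (I : Set T) (hI : IsInterval I) (t : T) :
    Cocone (downFunctor T t ⋙ intervalModule F T I) where
  pt := (intervalModule F T (overlineSet I)).obj t
  ι :=
    { app := overComp F T I hI t
      naturality := fun j k g => by
        simp only [Functor.const_obj_map, Category.comp_id]
        by_cases hj : Set.Ico j.1 t ⊆ I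
        · have hk : Set.Ico k.1 t ⊆ I := fun w hw => hj ⟨le_trans (leOfHom g) hw.1, hw.2⟩
          have hjk : Set.Icc j.1 k.1 ⊆ I := fun w hw => hj ⟨hw.1, lt_of_le_of_lt hw.2 k.2⟩
          rw [overComp_pos F T I hI t j hj, overComp_pos F T I hI t k hk, Functor.comp_map,
            im_map_pos F T ((downFunctor T t).map g) hjk]
          apply ModuleCat.hom_ext
          apply LinearMap.ext
          intro x
          rfl
        · rw [overComp_neg F T I hI t j hj]
          by_cases hjk : Set.Icc j.1 k.1 ⊆ I
          · have hk : ¬ Set.Ico k.1 t ⊆ I := fun hk => hj (fun w hw => by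
              rcases le_total w k.1 with h | h
              · exact hjk ⟨hw.1, h⟩
              · exact hk ⟨h, hw.2⟩)
            rw [overComp_neg F T I hI t k hk]
            exact comp_zero.trans zero_comp.symm
          · rw [Functor.comp_map, im_map_neg F T ((downFunctor T t).map g) hjk]
            exact zero_comp.trans zero_comp.symm }

lemma ι_elem {I : Set T} {t : T} (s : Cocone (downFunctor T t ⋙ intervalModule F T I))
    {a b : {x : T // x < t}} (hab : a.1 ≤ b.1) (hab' : Set.Icc a.1 b.1 ⊆ I)
    (x : ↥(if a.1 ∈ I then (⊤ : Submodule F F) else ⊥))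
    (hb : (x : F) ∈ (if b.1 ∈ I then (⊤ : Submodule F F) else ⊥)) :
    (s.ι.app a).hom x = (s.ι.app b).hom ⟨x, hb⟩ := by
  rw [← s.w (homOfLE (show a ≤ b from hab)), Functor.comp_map,
    im_map_pos F T ((downFunctor T t).map (homOfLE (show a ≤ b from hab))) hab']
  exact congrArg (s.ι.app b).hom (Subtype.ext rfl)

lemma ι_zero {I : Set T} {t : T} (s : Cocone (downFunctor T t ⋙ intervalModule F T I))
    (j : {x : T // x < t}) (hj : ¬ Set.Ico j.1 t ⊆ I) : s.ι.app j = 0 := by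
  by_cases hjI : j.1 ∈ I
  · obtain ⟨w, hw, hwI⟩ := Set.not_subset.mp hj
    rw [← s.w (homOfLE (show j ≤ ⟨w, hw.2⟩ from hw.1)), Functor.comp_map,
      im_map_neg F T ((downFunctor T t).map (homOfLE (show j ≤ ⟨w, hw.2⟩ from hw.1)))
        (fun hc => hwI (hc ⟨hw.1, le_refl w⟩)), zero_comp]
  · haveI hs : Subsingleton ↥(if j.1 ∈ I then (⊤ : Submodule F F) else ⊥) := by
      rw [if_neg hjI]; infer_instance
    apply ModuleCat.hom_ext
    apply LinearMap.ext
    intro x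
    simp only [ModuleCat.hom_zero, LinearMap.zero_apply]
    exact (congrArg _ (@Subsingleton.elim _ hs x 0)).trans (map_zero _)

/-- The comparison cocone is a colimit cocone. -/
noncomputable def overIsColim (I : Set T) (hI : IsInterval I) (t : T) :
    IsColimit (overCocone F T I hI t) where
  desc s :=
    if h : t ∈ overlineSet I then
      ModuleCat.ofHom (Submodule.inclusion (show (if t ∈ overlineSet I then (⊤ : Submodule F F) else ⊥) ≤
          (if h.1.choose ∈ I then ⊤ else ⊥) by
        rw [if_pos h.1.choose_spec.1]; exact le_top)) ≫
        s.ι.app ⟨h.1.choose, h.1.choose_spec.2⟩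
    else 0
  fac s j := by
    by_cases hj : Set.Ico j.1 t ⊆ I
    · have ht : t ∈ overlineSet I := lemA hI j.2 hj
      have hu : ht.1.choose ∈ I ∩ Set.Iio t := ht.1.choose_spec
      obtain ⟨v, hv, hmv⟩ := ht.2 (max j.1 ht.1.choose) (max_lt j.2 hu.2)
      have hvt : v < t := hv.2
      apply ModuleCat.hom_ext
      apply LinearMap.ext
      intro x
      rw [ModuleCat.hom_comp, LinearMap.comp_apply, dif_pos ht,
        show (overCocone F T I hI t).ι.app j = overComp F T I hI t j from rfl,
        overComp_pos F T I hI t j hj]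
      let x' : ↥(if j.1 ∈ I then (⊤ : Submodule F F) else ⊥) := x
      have pf_u : (x' : F) ∈ (if ht.1.choose ∈ I then (⊤ : Submodule F F) else ⊥) := by
        rw [if_pos hu.1]; trivial
      have pf_v : (x' : F) ∈ (if v ∈ I then (⊤ : Submodule F F) else ⊥) := by
        rw [if_pos hv.1]; trivial
      have step1 := ι_elem F T s (a := ⟨ht.1.choose, hu.2⟩) (b := ⟨v, hvt⟩)
        (le_trans (le_max_right _ _) hmv)
        (fun w hw => hI hw.1 hw.2 hu.1 hv.1) ⟨(x' : F), pf_u⟩ pf_v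
      have step2 := ι_elem F T s (a := j) (b := ⟨v, hvt⟩)
        (le_trans (le_max_left _ _) hmv)
        (fun w hw => hj ⟨hw.1, lt_of_le_of_lt hw.2 hvt⟩) x' pf_v
      exact step1.trans step2.symm
    · simp only [overCocone]
      rw [overComp_neg F T I hI t j hj]
      exact zero_comp.trans (ι_zero F T s j hj).symm
  uniq s m hm := by
    by_cases ht : t ∈ overlineSet I
    · simp only [dif_pos ht]
      have hu : ht.1.choose ∈ I ∩ Set.Iio t := ht.1.choose_spec
      have hIco : Set.Ico ht.1.choose t ⊆ I := lemB hI hu.1 ht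
      have hfac := hm ⟨ht.1.choose, hu.2⟩
      simp only [overCocone] at hfac
      rw [overComp_pos F T I hI t _ hIco] at hfac
      apply ModuleCat.hom_ext
      apply LinearMap.ext
      intro x
      let x' : ↥(if t ∈ overlineSet I then (⊤ : Submodule F F) else ⊥) := x
      have pf_u : (x' : F) ∈ (if ht.1.choose ∈ I then (⊤ : Submodule F F) else ⊥) := by
        rw [if_pos hu.1]; trivial
      exact (congrArg m.hom (Subtype.ext rfl :
          x' = Submodule.inclusion (show (if ht.1.choose ∈ I then (⊤ : Submodule F F) else ⊥) ≤
              (if t ∈ overlineSet I then ⊤ else ⊥) by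
            rw [if_pos ht]; exact le_top) ⟨(x' : F), pf_u⟩)).trans
        (congrArg (fun g => g.hom ⟨(x' : F), pf_u⟩) hfac)
    · simp only [dif_neg ht]
      haveI hs : Subsingleton ↥(if t ∈ overlineSet I then (⊤ : Submodule F F) else ⊥) := by
        rw [if_neg ht]; infer_instance
      apply ModuleCat.hom_ext
      apply LinearMap.ext
      intro x
      simp only [ModuleCat.hom_zero, LinearMap.zero_apply]
      exact (congrArg _ (@Subsingleton.elim _ hs x 0)).trans (map_zero _)

lemma overComp_key (I : Set T) (hI : IsInterval I) {s t : T} (f : s ⟶ t) (u : {x : T // x < s}) :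
    overComp F T I hI t ⟨u.1, lt_of_lt_of_le u.2 (leOfHom f)⟩ =
      overComp F T I hI s u ≫ (intervalModule F T (overlineSet I)).map f := by
  by_cases hut : Set.Ico u.1 t ⊆ I
  · have hus : Set.Ico u.1 s ⊆ I := fun w hw => hut ⟨hw.1, lt_of_lt_of_le hw.2 (leOfHom f)⟩
    have hst : Set.Icc s t ⊆ overlineSet I := fun w hw =>
      lemA hI (lt_of_lt_of_le u.2 hw.1) (fun v hv => hut ⟨hv.1, lt_of_lt_of_le hv.2 hw.2⟩)
    rw [overComp_pos F T I hI t _ hut, overComp_pos F T I hI s u hus, im_map_pos F T f hst]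
    apply ModuleCat.hom_ext
    apply LinearMap.ext
    intro x
    rfl
  · rw [overComp_neg F T I hI t _ hut]
    by_cases hus : Set.Ico u.1 s ⊆ I
    · have huI : u.1 ∈ I := hus ⟨le_refl _, u.2⟩
      have htn : t ∉ overlineSet I := fun ht => hut (lemB hI huI ht)
      rw [im_map_neg F T (I := overlineSet I) f (fun hc => htn (hc ⟨leOfHom f, le_refl t⟩)),
        comp_zero]
    · rw [overComp_neg F T I hI s u hus, zero_comp]

end OverlineAux

/-- `overline(C(I))` is isomorphic to `C(overline I)` (as persistence modules). -/
theorem overline_intervalModule_iso (I : Set T) (hI : IsInterval I) :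
    Nonempty (overlinePM F T (intervalModule F T I) ≅ intervalModule F T (overlineSet I)) := by
  refine ⟨NatIso.ofComponents
    (fun t => colimit.isoColimitCocone ⟨overCocone F T I hI t, overIsColim F T I hI t⟩)
    (fun {s t} f => ?_)⟩
  apply colimit.hom_ext
  intro u
  simp only [overlinePM]
  rw [← Category.assoc, colimit.ι_desc]
  simp only [colimit.isoColimitCocone_ι_hom, colimit.isoColimitCocone_ι_hom_assoc, overCocone]
  exact (colimit.isoColimitCocone_ι_hom _ _).trans (overComp_key F T I hI f u)
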